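/- For every n ≥ 1 and every mediated digraph D on n vertices, the maximum in-degree of D is at least ⌈(√(4n−3) − 1)/2⌉. Consequently μ(n) ≥ f(n). -/
import Mathlib


/-- The in-degree of vertex `z` in the digraph on `Fin n` with arc relation `A`
(`A x z` means `x` dominates `z`). -/
noncomputable def inDeg {n : ℕ} (A : Fin n → Fin n → Prop) (z : Fin n) : ℕ :=
  Nat.card {x : Fin n // A x z}

/-- The maximum in-degree `Δ⁻(D)` of the digraph on `Fin n` with arc relation `A`. -/
noncomputable def maxInDeg {n : ℕ} (A : Fin n → Fin n → Prop) : ℕ :=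
  Finset.univ.sup (inDeg A)

/-- A digraph is mediated if for every pair of distinct vertices `x, y` there is a
vertex `z` with `x, y ∈ N⁻[z]` (possibly `z = x` or `z = y`). -/
def Mediated {n : ℕ} (A : Fin n → Fin n → Prop) : Prop :=
  ∀ x y : Fin n, x ≠ y → ∃ z : Fin n, (x = z ∨ A x z) ∧ (y = z ∨ A y z)

/-- The `n`th mediation number `μ(n)`: the minimum of `Δ⁻(D)` over all mediated
digraphs (irreflexive arc relations) on `n` vertices. -/
noncomputable def mu (n : ℕ) : ℕ :=
  sInf { d : ℕ | ∃ A : Fin n → Fin n → Prop, Irreflexive A ∧ Mediated A ∧ maxInDeg A = d }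

/-- `f(n) = ⌈(√(4n−3) − 1)/2⌉`. -/
noncomputable def f (n : ℕ) : ℕ := ⌈(Real.sqrt (4 * (n : ℝ) - 3) - 1) / 2⌉₊

/-- For every `n ≥ 1` and every mediated digraph `D` on `n` vertices, the maximum
in-degree of `D` is at least `f(n) = ⌈(√(4n−3) − 1)/2⌉`; consequently `μ(n) ≥ f(n)`. -/
theorem mediation_lower_bound (n : ℕ) (hn : 1 ≤ n) :
    (∀ A : Fin n → Fin n → Prop, Irreflexive A → Mediated A → f n ≤ maxInDeg A) ∧
    f n ≤ mu n := by
  classical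
  have main : ∀ A : Fin n → Fin n → Prop, Irreflexive A → Mediated A → f n ≤ maxInDeg A := by
    intro A hIrr hMed
    set d := maxInDeg A with hd
    -- closed in-neighborhoods
    set N : Fin n → Finset (Fin n) :=
      fun z => insert z (Finset.univ.filter (fun x => A x z)) with hN
    have hNcard : ∀ z, (N z).card ≤ d + 1 := by
      intro z
      have hz : z ∉ Finset.univ.filter (fun x => A x z) := by
        simp [hIrr z]
      have h1 : (N z).card = (Finset.univ.filter (fun x => A x z)).card + 1 :=
        Finset.card_insert_of_notMem hz
      have h2 : (Finset.univ.filter (fun x => A x z)).card = inDeg A z := by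
        rw [inDeg, Nat.card_eq_fintype_card, Fintype.card_subtype]
      have h3 : inDeg A z ≤ d := Finset.le_sup (Finset.mem_univ z)
      omega
    have key : n - 1 ≤ d * (d + 1) := by
      have hsub : (Finset.univ : Finset (Fin n)).offDiag ⊆
          Finset.univ.biUnion (fun z => (N z).offDiag) := by
        intro p hp
        simp only [Finset.mem_offDiag, Finset.mem_univ, true_and] at hp
        obtain ⟨z, hz1, hz2⟩ := hMed p.1 p.2 hp
        refine Finset.mem_biUnion.2 ⟨z, Finset.mem_univ z, ?_⟩
        simp only [Finset.mem_offDiag]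
        refine ⟨?_, ?_, hp⟩ <;> simp only [hN, Finset.mem_insert, Finset.mem_filter,
          Finset.mem_univ, true_and] <;> tauto
      have hcard := Finset.card_le_card hsub
      have h1 : ((Finset.univ : Finset (Fin n)).offDiag).card = n * n - n := by
        rw [Finset.offDiag_card]; simp
      have h2 : (Finset.univ.biUnion (fun z => (N z).offDiag)).card ≤ n * ((d + 1) * d) := by
        calc (Finset.univ.biUnion (fun z => (N z).offDiag)).card
            ≤ ∑ z, ((N z).offDiag).card := Finset.card_biUnion_le
          _ ≤ ∑ _z : Fin n, (d + 1) * d := by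
              apply Finset.sum_le_sum
              intro z _
              rw [Finset.offDiag_card]
              have hc := hNcard z
              have e : (N z).card * (N z).card - (N z).card
                  = (N z).card * ((N z).card - 1) := by
                rw [Nat.mul_sub_one, Nat.mul_comm]
              rw [e]
              exact Nat.mul_le_mul hc (by omega)
          _ = n * ((d + 1) * d) := by simp [Finset.sum_const, Finset.card_univ, mul_comm]
      have hmul : n * (n - 1) ≤ n * ((d + 1) * d) := by
        have hnn : n * n - n = n * (n - 1) := by
          cases n with
          | zero => simp
          | succ m => rw [Nat.succ_sub_one]; ring_nf; omega
        omega
      have := Nat.le_of_mul_le_mul_left hmul (by omega : 0 < n)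
      nlinarith
    -- arithmetic: f n ≤ d
    rw [f, Nat.ceil_le, div_le_iff₀ (by norm_num : (0:ℝ) < 2), sub_le_iff_le_add]
    have hle : (4 * (n : ℝ) - 3) ≤ ((2 * (d:ℝ) + 1)) ^ 2 := by
      have hk : n ≤ d * (d + 1) + 1 := by omega
      have : (n : ℝ) ≤ (d : ℝ) * ((d : ℝ) + 1) + 1 := by exact_mod_cast hk
      nlinarith
    have hsq : Real.sqrt (4 * (n : ℝ) - 3) ≤ 2 * (d : ℝ) + 1 := by
      calc Real.sqrt (4 * (n : ℝ) - 3) ≤ Real.sqrt ((2 * (d:ℝ) + 1) ^ 2) :=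
            Real.sqrt_le_sqrt hle
        _ = 2 * (d : ℝ) + 1 := Real.sqrt_sq (by positivity)
    linarith
  refine ⟨main, ?_⟩
  have hS : { d : ℕ | ∃ A : Fin n → Fin n → Prop,
      Irreflexive A ∧ Mediated A ∧ maxInDeg A = d }.Nonempty := by
    refine ⟨maxInDeg (fun x y : Fin n => x ≠ y), fun x y : Fin n => x ≠ y, ?_, ?_, rfl⟩
    · intro x hx; exact hx rfl
    · intro x y hxy
      exact ⟨x, Or.inl rfl, Or.inr (Ne.symm hxy)⟩
  obtain ⟨A, hI, hM, hEq⟩ := Nat.sInf_mem hS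
  rw [mu, ← hEq]
  exact main A hI hM
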